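/- If X is a random variable uniformly distributed on the open unit disc in the complex plane, then E[(log|1 - X|)²] = (ζ(2) - 1)/2. -/

import Mathlib

open Real Complex MeasureTheory

lemma integral_cos_freq (c : ℝ) (hc : c ≠ 0) :
    ∫ x in (-π)..π, Real.cos (c * x) = 2 * Real.sin (c * π) / c := by
  rw [intervalIntegral.integral_comp_mul_left Real.cos hc, integral_cos]
  rw [mul_neg, Real.sin_neg]
  field_simp
  rw [smul_eq_mul, ← mul_assoc, mul_one_div_cancel hc, one_mul]
  ring

lemma cos_orth (n m : ℕ) :
    ∫ θ in Set.Ioo (-π) π, Real.cos ((n+1)*θ) * Real.cos ((m+1)*θ)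
      = if n = m then π else 0 := by
  rw [← integral_Ioc_eq_integral_Ioo,
    ← intervalIntegral.integral_of_le (by linarith [Real.pi_pos] : -π ≤ π)]
  have key : ∀ θ : ℝ, Real.cos ((n+1)*θ) * Real.cos ((m+1)*θ)
      = (Real.cos ((((n:ℝ)) - m) * θ) + Real.cos (((n:ℝ) + m + 2) * θ)) / 2 := by
    intro θ
    rw [show (((n:ℝ)) - m) * θ = (n+1)*θ - (m+1)*θ by ring,
      show (((n:ℝ)) + m + 2) * θ = (n+1)*θ + (m+1)*θ by ring,
      Real.cos_sub, Real.cos_add]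
    ring
  simp_rw [key]
  rw [intervalIntegral.integral_div]
  rw [intervalIntegral.integral_add]
  · have h2 : ∫ x in (-π)..π, Real.cos (((n:ℝ) + m + 2) * x) = 0 := by
      rw [integral_cos_freq _ (by positivity)]
      have : ((n:ℝ) + m + 2) = ((n + m + 2 : ℕ) : ℝ) := by push_cast; ring
      rw [this, Real.sin_nat_mul_pi]
      simp
    rw [h2, add_zero]
    rcases eq_or_ne n m with rfl | hnm
    · simp only [sub_self, zero_mul, Real.cos_zero, intervalIntegral.integral_const,
        smul_eq_mul, mul_one, sub_neg_eq_add, if_true, eq_self_iff_true]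
      ring
    · rw [integral_cos_freq _ (by
        simp only [ne_eq, sub_eq_zero, Nat.cast_inj]
        exact_mod_cast fun h => hnm (Nat.cast_injective h))]
      have : ((n:ℝ) - m) = ((n - m : ℤ) : ℝ) := by push_cast; ring
      rw [this, Real.sin_int_mul_pi]
      simp [hnm]
  · exact (Real.continuous_cos.comp (continuous_const.mul continuous_id)).intervalIntegrable _ _
  · exact (Real.continuous_cos.comp (continuous_const.mul continuous_id)).intervalIntegrable _ _

set_option maxHeartbeats 2000000 in
lemma hasSum_F (r θ : ℝ) (hr0 : 0 < r) (hr1 : r < 1) :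
    HasSum (fun p : ℕ × ℕ =>
      (r ^ (p.1 + p.2 + 3) / (((p.1:ℝ)+1)*((p.2:ℝ)+1))) *
        (Real.cos (((p.1:ℝ)+1)*θ) * Real.cos (((p.2:ℝ)+1)*θ)))
      (r * (Real.log (‖1 - (r:ℂ) * Complex.exp ((θ:ℂ) * Complex.I)‖))^2) := by
  set z : ℂ := (r:ℂ) * Complex.exp ((θ:ℂ) * Complex.I) with hzdef
  have hz : ‖z‖ < 1 := by
    simp only [hzdef, norm_mul, Complex.norm_real, Real.norm_eq_abs,
      Complex.norm_exp_ofReal_mul_I, mul_one]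
    rwa [abs_of_pos hr0]
  have hterm : ∀ n : ℕ, (z ^ n / (n:ℂ)).re = r ^ n * Real.cos ((n:ℝ) * θ) / (n:ℝ) := by
    intro n
    have hzn : z ^ n = ((r ^ n : ℝ) : ℂ) * Complex.exp ((((n:ℝ) * θ : ℝ) : ℂ) * Complex.I) := by
      rw [hzdef, mul_pow, ← Complex.exp_nat_mul]
      push_cast
      ring_nf
    rw [hzn, Complex.div_natCast_re, Complex.re_ofReal_mul, Complex.exp_ofReal_mul_I_re]
  have h3 : HasSum (fun n : ℕ => r ^ n * Real.cos ((n:ℝ) * θ) / (n:ℝ))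
      (-Real.log (‖1 - z‖)) := by
    have h2 := Complex.hasSum_re (Complex.hasSum_taylorSeries_neg_log hz)
    simpa only [hterm, Complex.neg_re, Complex.log_re] using h2
  have h4 : HasSum (fun n : ℕ => r ^ (n+1) * Real.cos (((n:ℝ)+1) * θ) / ((n:ℝ)+1))
      (-Real.log (‖1 - z‖)) := by
    have := (hasSum_nat_add_iff' (f := fun n : ℕ => r ^ n * Real.cos ((n:ℝ) * θ) / (n:ℝ)) 1).mpr h3
    simpa using this
  have hs : Summable (fun n : ℕ => ‖r ^ (n+1) * Real.cos (((n:ℝ)+1) * θ) / ((n:ℝ)+1)‖) := by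
    have hgeo : Summable (fun n : ℕ => r ^ (n+1)) := by
      simpa [pow_succ] using (summable_geometric_of_lt_one hr0.le hr1).mul_right r
    refine Summable.of_nonneg_of_le (fun n => norm_nonneg _) (fun n => ?_) hgeo
    rw [Real.norm_eq_abs, abs_div, abs_mul, _root_.abs_pow, abs_of_pos hr0,
      abs_of_pos (by positivity : (0:ℝ) < (n:ℝ)+1)]
    calc r ^ (n+1) * |Real.cos (((n:ℝ)+1) * θ)| / ((n:ℝ)+1)
        ≤ r ^ (n+1) * 1 / 1 := by
          gcongr
          · exact Real.abs_cos_le_one _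
          · linarith [Nat.cast_nonneg (α := ℝ) n]
      _ = r ^ (n+1) := by ring
  have h5 := (h4.mul h4 (summable_mul_of_summable_norm hs hs)).mul_left r
  have hfun : (fun p : ℕ × ℕ =>
      (r ^ (p.1 + p.2 + 3) / (((p.1:ℝ)+1)*((p.2:ℝ)+1))) *
        (Real.cos (((p.1:ℝ)+1)*θ) * Real.cos (((p.2:ℝ)+1)*θ)))
      = fun p : ℕ × ℕ => r * ((r ^ (p.1+1) * Real.cos (((p.1:ℝ)+1) * θ) / ((p.1:ℝ)+1)) *
          (r ^ (p.2+1) * Real.cos (((p.2:ℝ)+1) * θ) / ((p.2:ℝ)+1))) := by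
    funext p
    have h1 : ((p.1:ℝ)+1) ≠ 0 := by positivity
    have h2 : ((p.2:ℝ)+1) ≠ 0 := by positivity
    field_simp
    ring
  rw [hfun, show r * (Real.log (‖1 - z‖))^2
      = r * ((-Real.log (‖1 - z‖)) * (-Real.log (‖1 - z‖))) by ring]
  exact h5

noncomputable def Fterm (p : ℕ × ℕ) (x : ℝ × ℝ) : ℝ :=
  (x.1 ^ (p.1 + p.2 + 3) / (((p.1:ℝ)+1)*((p.2:ℝ)+1))) *
    (Real.cos (((p.1:ℝ)+1)*x.2) * Real.cos (((p.2:ℝ)+1)*x.2))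

lemma Fterm_cont (p : ℕ × ℕ) : Continuous (Fterm p) := by
  unfold Fterm; fun_prop

lemma integral_Ioo_pow (k : ℕ) : ∫ r in Set.Ioo (0:ℝ) 1, r ^ k = 1/((k:ℝ)+1) := by
  rw [← integral_Ioc_eq_integral_Ioo, ← intervalIntegral.integral_of_le zero_le_one,
    integral_pow]
  simp

lemma Fterm_integrableOn (p : ℕ × ℕ) :
    IntegrableOn (Fterm p) (Set.Ioo (0:ℝ) 1 ×ˢ Set.Ioo (-π) π) := by
  have h := (Fterm_cont p).continuousOn.integrableOn_compact (μ := volume) ((isCompact_Icc (a := (0:ℝ)) (b := 1)).prod (isCompact_Icc (a := -π) (b := π)))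
  exact h.mono_set (Set.prod_mono Set.Ioo_subset_Icc_self Set.Ioo_subset_Icc_self)

lemma summable_u : Summable (fun j : ℕ => (((j:ℝ)+1) * Real.sqrt ((j:ℝ)+1))⁻¹) := by
  have h0 : Summable (fun n : ℕ => (((n:ℝ)) ^ ((3:ℝ)/2))⁻¹) :=
    Real.summable_nat_rpow_inv.mpr (by norm_num)
  have h1 := (summable_nat_add_iff 1).mpr h0
  refine h1.congr fun j => ?_
  have hj : (0:ℝ) < (j:ℝ) + 1 := by positivity
  push_cast
  rw [show ((3:ℝ)/2) = 1 + 1/2 by norm_num, Real.rpow_add hj, Real.rpow_one,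
    ← Real.sqrt_eq_rpow]

lemma sqrt_ineq (n m : ℕ) :
    (((n:ℝ)+1) * Real.sqrt ((n:ℝ)+1)) * (((m:ℝ)+1) * Real.sqrt ((m:ℝ)+1))
      ≤ (((n:ℝ)+1)*((m:ℝ)+1)) * ((n:ℝ)+(m:ℝ)+4) := by
  have hn : (0:ℝ) ≤ (n:ℝ)+1 := by positivity
  have hm : (0:ℝ) ≤ (m:ℝ)+1 := by positivity
  have key : Real.sqrt ((n:ℝ)+1) * Real.sqrt ((m:ℝ)+1) ≤ (n:ℝ)+(m:ℝ)+4 := by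
    rw [← Real.sqrt_mul hn]
    have h2 : (((n:ℝ)+1) * ((m:ℝ)+1)) ≤ ((n:ℝ)+(m:ℝ)+4)^2 := by nlinarith [Nat.cast_nonneg (α := ℝ) n, Nat.cast_nonneg (α := ℝ) m]
    calc Real.sqrt (((n:ℝ)+1) * ((m:ℝ)+1)) ≤ Real.sqrt (((n:ℝ)+(m:ℝ)+4)^2) := Real.sqrt_le_sqrt h2
      _ = (n:ℝ)+(m:ℝ)+4 := Real.sqrt_sq (by positivity)
  calc (((n:ℝ)+1) * Real.sqrt ((n:ℝ)+1)) * (((m:ℝ)+1) * Real.sqrt ((m:ℝ)+1))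
      = (((n:ℝ)+1)*((m:ℝ)+1)) * (Real.sqrt ((n:ℝ)+1) * Real.sqrt ((m:ℝ)+1)) := by ring
    _ ≤ (((n:ℝ)+1)*((m:ℝ)+1)) * ((n:ℝ)+(m:ℝ)+4) := by
        apply mul_le_mul_of_nonneg_left key (by positivity)

lemma summable_integral_norm_Fterm :
    Summable (fun p : ℕ × ℕ => ∫ x in Set.Ioo (0:ℝ) 1 ×ˢ Set.Ioo (-π) π, ‖Fterm p x‖) := by
  set S := Set.Ioo (0:ℝ) 1 ×ˢ Set.Ioo (-π) π with hS
  have hmeas : MeasurableSet S := (measurableSet_Ioo.prod measurableSet_Ioo)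
  -- the bounding function
  have hbd : ∀ p : ℕ × ℕ, (∫ x in S, ‖Fterm p x‖)
      ≤ 2*π * ((((p.1:ℝ)+1) * Real.sqrt ((p.1:ℝ)+1))⁻¹ * (((p.2:ℝ)+1) * Real.sqrt ((p.2:ℝ)+1))⁻¹) := by
    intro p
    have hc1 : (0:ℝ) < ((p.1:ℝ)+1) := by positivity
    have hc2 : (0:ℝ) < ((p.2:ℝ)+1) := by positivity
    have hGcont : Continuous (fun x : ℝ × ℝ => x.1 ^ (p.1 + p.2 + 3) / (((p.1:ℝ)+1)*((p.2:ℝ)+1)) * 1) := by fun_prop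
    have hGint : IntegrableOn (fun x : ℝ × ℝ => x.1 ^ (p.1 + p.2 + 3) / (((p.1:ℝ)+1)*((p.2:ℝ)+1)) * 1) S := by
      have h := hGcont.continuousOn.integrableOn_compact (μ := volume) ((isCompact_Icc (a := (0:ℝ)) (b := 1)).prod (isCompact_Icc (a := -π) (b := π)))
      exact h.mono_set (Set.prod_mono Set.Ioo_subset_Icc_self Set.Ioo_subset_Icc_self)
    have step1 : (∫ x in S, ‖Fterm p x‖)
        ≤ ∫ x in S, x.1 ^ (p.1 + p.2 + 3) / (((p.1:ℝ)+1)*((p.2:ℝ)+1)) * 1 := by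
      refine setIntegral_mono_on ((Fterm_integrableOn p).norm) hGint hmeas fun x hx => ?_
      obtain ⟨hx1, _⟩ := hx
      have hx1' : 0 < x.1 := hx1.1
      have hx1'' : x.1 ≤ 1 := hx1.2.le
      unfold Fterm
      rw [Real.norm_eq_abs, abs_mul,
        _root_.abs_of_nonneg (by positivity : (0:ℝ) ≤ x.1 ^ (p.1 + p.2 + 3) / (((p.1:ℝ)+1)*((p.2:ℝ)+1)))]
      have hcos : |Real.cos (((p.1:ℝ)+1)*x.2) * Real.cos (((p.2:ℝ)+1)*x.2)| ≤ 1 := by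
        rw [abs_mul]
        calc |Real.cos (((p.1:ℝ)+1)*x.2)| * |Real.cos (((p.2:ℝ)+1)*x.2)| ≤ 1 * 1 :=
          mul_le_mul (Real.abs_cos_le_one _) (Real.abs_cos_le_one _) (abs_nonneg _) zero_le_one
          _ = 1 := mul_one 1
      gcongr
    have step2 : (∫ x in S, x.1 ^ (p.1 + p.2 + 3) / (((p.1:ℝ)+1)*((p.2:ℝ)+1)) * 1)
        = 2*π / ((((p.1:ℝ)+1)*((p.2:ℝ)+1)) * ((p.1:ℝ)+(p.2:ℝ)+4)) := by
      rw [hS, MeasureTheory.Measure.volume_eq_prod ℝ ℝ, setIntegral_prod_mul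
        (fun r => r ^ (p.1 + p.2 + 3) / (((p.1:ℝ)+1)*((p.2:ℝ)+1))) (fun _ => (1:ℝ))]
      rw [integral_div, integral_Ioo_pow, setIntegral_const, measureReal_def, Real.volume_Ioo,
        ENNReal.toReal_ofReal (by linarith [Real.pi_pos] : (0:ℝ) ≤ π - -π), smul_eq_mul, mul_one]
      rw [div_div, show ((((p.1+p.2+3 : ℕ)):ℝ)+1) * (((p.1:ℝ)+1)*((p.2:ℝ)+1))
          = ((((p.1:ℝ)+1)*((p.2:ℝ)+1)) * ((p.1:ℝ)+(p.2:ℝ)+4)) by push_cast; ring,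
        one_div, inv_mul_eq_div]
      ring
    refine (step1.trans_eq step2).trans ?_
    calc 2*π / ((((p.1:ℝ)+1)*((p.2:ℝ)+1)) * ((p.1:ℝ)+(p.2:ℝ)+4))
        ≤ 2*π / ((((p.1:ℝ)+1) * Real.sqrt ((p.1:ℝ)+1)) * (((p.2:ℝ)+1) * Real.sqrt ((p.2:ℝ)+1))) := by
          apply div_le_div_of_nonneg_left (by positivity) (by positivity) (sqrt_ineq p.1 p.2)
      _ = 2*π * ((((p.1:ℝ)+1) * Real.sqrt ((p.1:ℝ)+1))⁻¹ * (((p.2:ℝ)+1) * Real.sqrt ((p.2:ℝ)+1))⁻¹) := by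
          rw [div_eq_mul_inv, mul_inv]
  have hsum : Summable (fun p : ℕ × ℕ =>
      2*π * ((((p.1:ℝ)+1) * Real.sqrt ((p.1:ℝ)+1))⁻¹ * (((p.2:ℝ)+1) * Real.sqrt ((p.2:ℝ)+1))⁻¹)) := by
    have h := summable_norm_iff.mpr summable_u
    exact (summable_mul_of_summable_norm h h).mul_left (2*π)
  exact Summable.of_nonneg_of_le (fun p => integral_nonneg fun x => norm_nonneg _) hbd hsum

lemma integral_Fterm (p : ℕ × ℕ) :
    ∫ x in Set.Ioo (0:ℝ) 1 ×ˢ Set.Ioo (-π) π, Fterm p x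
      = if p.1 = p.2 then π/((2*(p.1:ℝ)+4)*((p.1:ℝ)+1)^2) else 0 := by
  have : ∫ x in Set.Ioo (0:ℝ) 1 ×ˢ Set.Ioo (-π) π, Fterm p x
      = (∫ r in Set.Ioo (0:ℝ) 1, r ^ (p.1 + p.2 + 3) / (((p.1:ℝ)+1)*((p.2:ℝ)+1))) *
        (∫ θ in Set.Ioo (-π) π, Real.cos (((p.1:ℝ)+1)*θ) * Real.cos (((p.2:ℝ)+1)*θ)) := by
    rw [MeasureTheory.Measure.volume_eq_prod ℝ ℝ, ← setIntegral_prod_mul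
      (fun r => r ^ (p.1 + p.2 + 3) / (((p.1:ℝ)+1)*((p.2:ℝ)+1)))
      (fun θ => Real.cos (((p.1:ℝ)+1)*θ) * Real.cos (((p.2:ℝ)+1)*θ))]
    rfl
  rw [this, integral_div, integral_Ioo_pow, cos_orth]
  rcases eq_or_ne p.1 p.2 with h | h
  · rw [if_pos h, if_pos h, ← h]
    have h1 : ((p.1:ℝ)+1) ≠ 0 := by positivity
    field_simp
    ring_nf
    push_cast; ring
  · rw [if_neg h, if_neg h, mul_zero]

lemma hasSum_diag :
    HasSum (fun p : ℕ × ℕ => if p.1 = p.2 then π/((2*(p.1:ℝ)+4)*((p.1:ℝ)+1)^2) else 0)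
      (π/2 * (π^2/6 - 1)) := by
  have htel : HasSum (fun n : ℕ => 1/((n:ℝ)+1) - 1/((n:ℝ)+2)) 1 := by
    rw [hasSum_iff_tendsto_nat_of_nonneg]
    · have hsum : ∀ N : ℕ, ∑ i ∈ Finset.range N, (1/((i:ℝ)+1) - 1/((i:ℝ)+2))
          = 1 - 1/((N:ℝ)+1) := by
        intro N
        have := Finset.sum_range_sub' (fun i : ℕ => 1/((i:ℝ)+1)) N
        rw [show (1:ℝ) - 1/((N:ℝ)+1) = (fun i : ℕ => 1/((i:ℝ)+1)) 0 - (fun i : ℕ => 1/((i:ℝ)+1)) N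
          by norm_num, ← this]
        apply Finset.sum_congr rfl
        intro i _
        push_cast
        ring_nf
      simp_rw [hsum]
      have := tendsto_one_div_add_atTop_nhds_zero_nat (𝕜 := ℝ)
      have h2 := (tendsto_const_nhds (x := (1:ℝ)) (f := Filter.atTop (α := ℕ))).sub this
      simpa using h2
    · intro i
      have h1 : (0:ℝ) < (i:ℝ)+1 := by positivity
      have h2 : (0:ℝ) < (i:ℝ)+2 := by positivity
      have : 1/((i:ℝ)+2) ≤ 1/((i:ℝ)+1) := by
        apply one_div_le_one_div_of_le h1; linarith
      linarith
  have hb : HasSum (fun n : ℕ => 1/((n:ℝ)+1)^2) (π^2/6) := by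
    have := (hasSum_nat_add_iff' (f := fun n : ℕ => 1/((n:ℝ))^2) 1).mpr hasSum_zeta_two
    simpa using this
  have hdiff := (hb.sub htel).mul_left (π/2)
  have hdiag : HasSum (fun n : ℕ => π/((2*(n:ℝ)+4)*((n:ℝ)+1)^2)) (π/2 * (π^2/6 - 1)) := by
    refine hdiff.congr_fun fun n => ?_
    have h1 : ((n:ℝ)+1) ≠ 0 := by positivity
    have h2 : ((n:ℝ)+2) ≠ 0 := by positivity
    field_simp
    ring
  have hinj : Function.Injective (fun n : ℕ => ((n, n) : ℕ × ℕ)) := by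
    intro a b h
    simpa using congrArg Prod.fst h
  rw [← hinj.hasSum_iff (f := fun p : ℕ × ℕ =>
      if p.1 = p.2 then π/((2*(p.1:ℝ)+4)*((p.1:ℝ)+1)^2) else 0)]
  · exact hdiag.congr_fun fun n => by simp
  · intro p hp
    have : p.1 ≠ p.2 := by
      intro h
      exact hp ⟨p.1, Prod.ext rfl h⟩
    simp [this]

/-- The uniform probability measure on the open unit disc in `ℂ`. -/
noncomputable def unifDisc : Measure ℂ :=
  (volume (Metric.ball (0 : ℂ) 1))⁻¹ • volume.restrict (Metric.ball (0 : ℂ) 1)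

lemma key_ball :
    ∫ w in Metric.ball (0:ℂ) 1, (Real.log (‖1 - w‖)) ^ 2
      = π/2 * (π^2/6 - 1) := by
  set g : ℂ → ℝ := fun w => (Real.log (‖1 - w‖)) ^ 2 with hg
  set S : Set (ℝ × ℝ) := Set.Ioo (0:ℝ) 1 ×ˢ Set.Ioo (-π) π with hSdef
  have hSmeas : MeasurableSet S := measurableSet_Ioo.prod measurableSet_Ioo
  have hsub : S ⊆ polarCoord.target := by
    rw [hSdef, polarCoord_target]
    exact Set.prod_mono Set.Ioo_subset_Ioi_self subset_rfl
  have h1 : ∫ w in Metric.ball (0:ℂ) 1, g w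
      = ∫ p in S, p.1 • g (Complex.polarCoord.symm p) := by
    rw [← integral_indicator measurableSet_ball,
      ← Complex.integral_comp_polarCoord_symm (fun w => Set.indicator (Metric.ball 0 1) g w)]
    have hptwise : ∀ p ∈ polarCoord.target,
        p.1 • Set.indicator (Metric.ball (0:ℂ) 1) g (Complex.polarCoord.symm p)
          = Set.indicator S (fun q : ℝ × ℝ => q.1 • g (Complex.polarCoord.symm q)) p := by
      intro p hp
      rw [polarCoord_target] at hp
      obtain ⟨hp1, hp2⟩ := hp
      have habs : ‖Complex.polarCoord.symm p‖ = |p.1| :=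
        Complex.norm_polarCoord_symm p
      by_cases hlt : p.1 < 1
      · have hmem : Complex.polarCoord.symm p ∈ Metric.ball (0:ℂ) 1 := by
          rw [Metric.mem_ball, dist_zero_right, habs,
            abs_of_pos (Set.mem_Ioi.mp hp1)]
          exact hlt
        have hmemS : p ∈ S := by
          rw [hSdef]
          exact ⟨⟨Set.mem_Ioi.mp hp1, hlt⟩, hp2⟩
        rw [Set.indicator_of_mem hmem, Set.indicator_of_mem hmemS]
      · have hmem : Complex.polarCoord.symm p ∉ Metric.ball (0:ℂ) 1 := by
          rw [Metric.mem_ball, dist_zero_right, habs,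
            abs_of_pos (Set.mem_Ioi.mp hp1)]
          exact fun h => hlt h
        have hmemS : p ∉ S := by
          rw [hSdef]
          rintro ⟨⟨-, h⟩, -⟩
          exact hlt h
        rw [Set.indicator_of_notMem hmem, Set.indicator_of_notMem hmemS, smul_zero]
    rw [setIntegral_congr_fun polarCoord.open_target.measurableSet hptwise,
      setIntegral_indicator hSmeas, Set.inter_eq_self_of_subset_right hsub]
  have h2 : ∀ p ∈ S, p.1 • g (Complex.polarCoord.symm p) = ∑' q : ℕ × ℕ, Fterm q p := by
    intro p hp
    rw [hSdef] at hp
    obtain ⟨hp1, hp2⟩ := hp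
    have hsymm : Complex.polarCoord.symm p = (p.1:ℂ) * Complex.exp ((p.2:ℂ) * Complex.I) := by
      rw [Complex.polarCoord_symm_apply, Complex.exp_mul_I]
      push_cast
      ring
    rw [hsymm, smul_eq_mul, hg]
    exact ((hasSum_F p.1 p.2 hp1.1 hp1.2).tsum_eq).symm
  rw [h1, setIntegral_congr_fun hSmeas h2,
    ← integral_tsum_of_summable_integral_norm (fun q => Fterm_integrableOn q)
      summable_integral_norm_Fterm]
  rw [tsum_congr integral_Fterm]
  exact hasSum_diag.tsum_eq

/-- If `X` is uniform on the unit disc, then `E[(log|1 - X|)²] = (ζ(2) - 1)/2`. -/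
theorem expectation_sq_log_abs_one_sub_uniform :
    ∫ w, (Real.log (‖1 - w‖)) ^ 2 ∂unifDisc = (π ^ 2 / 6 - 1) / 2 := by
  rw [unifDisc, integral_smul_measure, key_ball]
  rw [Complex.volume_ball]
  have : ((ENNReal.ofReal 1 ^ 2 * (NNReal.pi : ENNReal))⁻¹).toReal = π⁻¹ := by
    rw [ENNReal.ofReal_one, one_pow, one_mul, ENNReal.toReal_inv, ENNReal.coe_toReal,
      NNReal.coe_real_pi]
  rw [this, smul_eq_mul]
  have hπ : (π : ℝ) ≠ 0 := Real.pi_ne_zero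
  calc π⁻¹ * (π/2 * (π^2/6 - 1)) = (π⁻¹ * π) * ((π^2/6 - 1)/2) := by ring
    _ = (π^2/6 - 1)/2 := by rw [inv_mul_cancel₀ hπ, one_mul]
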